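/- (Subsolution under the Cordes–Landis condition, Lemma 4.2, pointwise form) Suppose λI_0 ≤ A(z) ≤ ΛI_0 and set A_0 = I_0, β = λ, s = Λ/λ. Then for every z with t > 0: sβ tr(I_0C^{-1}(t)) − tr(A(z)C^{-1}(t)) + (1/2)[(1/β)⟨A(z)C^{-1}(t)x, C^{-1}(t)x⟩ − ⟨I_0C^{-1}(t)x, C^{-1}(t)x⟩] ≥ 0, i.e., L_A Γ_{s,β} ≥ 0 wherever Γ_{s,β} is smooth. -/

import Mathlib

open Matrix

lemma psd_trace_nonneg {N : ℕ} {M : Matrix (Fin N) (Fin N) ℝ} (hM : M.PosSemidef) :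
    0 ≤ M.trace := by
  rw [Matrix.trace]
  apply Finset.sum_nonneg
  intro i _
  have h := hM.dotProduct_mulVec_nonneg (Pi.single i 1)
  have e : star (Pi.single i 1 : Fin N → ℝ) ⬝ᵥ M *ᵥ Pi.single i 1 = M i i := by
    simp [Matrix.mulVec_single, dotProduct, Pi.single_apply]
  rw [e] at h
  exact h

open scoped MatrixOrder in
lemma psd_trace_mul_nonneg {N : ℕ} {P Q : Matrix (Fin N) (Fin N) ℝ}
    (hP : P.PosSemidef) (hQ : Q.PosSemidef) : 0 ≤ (P * Q).trace := by
  have h1 : P * Q = CFC.sqrt P * (CFC.sqrt P * Q) := by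
    rw [← mul_assoc, CFC.sqrt_mul_sqrt_self P hP.nonneg]
  rw [h1, Matrix.trace_mul_comm]
  have hs : (CFC.sqrt P * Q * CFC.sqrt P).PosSemidef := by
    have h2 := hQ.mul_mul_conjTranspose_same (CFC.sqrt P)
    rwa [(CFC.sqrt_nonneg P).posSemidef.1.eq] at h2
  exact psd_trace_nonneg hs

theorem stmt14 (N : ℕ) (lam Lam : ℝ) (hlam : 0 < lam) (hLL : lam ≤ Lam)
    (I0 A Cinv : Matrix (Fin N) (Fin N) ℝ)
    (hI0 : I0.PosSemidef) (hCinv : Cinv.PosSemidef) (hAsymm : A.IsSymm)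
    (hAlow : (A - lam • I0).PosSemidef) (hAup : (Lam • I0 - A).PosSemidef)
    (s β : ℝ) (hs : s = Lam / lam) (hβ : β = lam) :
    ∀ x : Fin N → ℝ,
      0 ≤ s * β * (I0 * Cinv).trace - (A * Cinv).trace +
        (1 / 2) * ((1 / β) * (Cinv.mulVec x ⬝ᵥ A.mulVec (Cinv.mulVec x)) -
          (Cinv.mulVec x ⬝ᵥ I0.mulVec (Cinv.mulVec x))) := by
  intro x
  rw [hs, hβ]
  set y := Cinv.mulVec x
  have hsl : Lam / lam * lam = Lam := div_mul_cancel₀ _ hlam.ne'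
  have htr : 0 ≤ ((Lam • I0 - A) * Cinv).trace := psd_trace_mul_nonneg hAup hCinv
  rw [Matrix.sub_mul, Matrix.smul_mul, Matrix.trace_sub, Matrix.trace_smul, smul_eq_mul] at htr
  have hquad := hAlow.dotProduct_mulVec_nonneg y
  rw [Matrix.sub_mulVec, Matrix.smul_mulVec, dotProduct_sub, dotProduct_smul,
    smul_eq_mul] at hquad
  have hstar : star y = y := rfl
  rw [hstar] at hquad
  have h2 : 0 ≤ (1 / lam) * (y ⬝ᵥ A.mulVec y) - y ⬝ᵥ I0.mulVec y := by
    have h3 := mul_nonneg (le_of_lt (one_div_pos.mpr hlam)) hquad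
    have hc : (1 / lam) * (lam * (y ⬝ᵥ I0.mulVec y)) = y ⬝ᵥ I0.mulVec y := by
      field_simp
    nlinarith
  rw [hsl]
  nlinarith
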